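/- Let (H,R) be a quasitriangular Hopf algebra and define the transmuted comultiplication on H by Δ̲(x) = Σ x₁S(R²) ⊗ (R¹ ▷ x₂), where h ▷ y = h₁yS(h₂). Then Δ̲(x) = Σ (R² ▷ x₂) ⊗ R¹x₁ for all x ∈ H. -/

import Mathlib

open TensorProduct

noncomputable section

/-- Scalar multiplication by a fixed `h : H` as a `k`-linear map. -/
def smulL (k : Type) {H M : Type} [CommRing k] [Ring H] [AddCommGroup M]
    [Module k M] [Module H M] [SMulCommClass H k M] (h : H) : M →ₗ[k] M where
  toFun m := h • m
  map_add' := smul_add h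
  map_smul' c m := smul_comm h c m

/-- The module action `H ⊗ M → M` as a linear map. -/
def actT (k H M : Type) [CommRing k] [Ring H] [Algebra k H] [AddCommGroup M]
    [Module k M] [Module H M] [IsScalarTower k H M] [SMulCommClass H k M] :
    H ⊗[k] M →ₗ[k] M :=
  TensorProduct.lift
    { toFun := fun h => smulL k h
      map_add' := fun h h' => LinearMap.ext fun m => add_smul h h' m
      map_smul' := fun c h => LinearMap.ext fun m => smul_assoc c h m }

/-- Quasitriangular structure, with the R-matrix given by a finite family
`R = ∑ i, R1 i ⊗ R2 i`, satisfying (QT1)-(QT4) and invertibility. -/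
structure QT (k H : Type) [CommRing k] [Ring H] [HopfAlgebra k H]
    {ι : Type} [Fintype ι] (R1 R2 : ι → H) : Prop where
  qt1a : ∑ i, Coalgebra.counit (R := k) (R1 i) • R2 i = (1 : H)
  qt1b : ∑ i, Coalgebra.counit (R := k) (R2 i) • R1 i = (1 : H)
  qt2 : ∑ i, Coalgebra.comul (R := k) (R1 i) ⊗ₜ[k] R2 i
      = ∑ i, ∑ j, (R1 i ⊗ₜ[k] R1 j) ⊗ₜ[k] (R2 i * R2 j)
  qt3 : ∑ i, R1 i ⊗ₜ[k] Coalgebra.comul (R := k) (R2 i)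
      = ∑ i, ∑ j, (R1 i * R1 j) ⊗ₜ[k] (R2 j ⊗ₜ[k] R2 i)
  qt4 : ∀ h : H, (∑ i, R1 i ⊗ₜ[k] R2 i) * Coalgebra.comul (R := k) h
      = TensorProduct.comm k H H (Coalgebra.comul (R := k) h) * (∑ i, R1 i ⊗ₜ[k] R2 i)
  isUnit : IsUnit (∑ i, R1 i ⊗ₜ[k] R2 i)

/-- The left adjoint action `h ⊗ x ↦ h₁ x S(h₂)` as a linear map. -/
def adjT (k H : Type) [CommRing k] [Ring H] [HopfAlgebra k H] : H ⊗[k] H →ₗ[k] H :=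
  (LinearMap.mul' k H) ∘ₗ
    (LinearMap.lTensor H (LinearMap.mul' k H)) ∘ₗ
    (LinearMap.lTensor H ((TensorProduct.map (LinearMap.id : H →ₗ[k] H)
        (HopfAlgebra.antipode (R := k))) ∘ₗ (TensorProduct.comm k H H).toLinearMap)) ∘ₗ
    (TensorProduct.assoc k H H H).toLinearMap ∘ₗ
    (LinearMap.rTensor H (Coalgebra.comul (R := k)))

/-- The diagonal action of `H` on `M ⊗ N`, `h ⊗ (m ⊗ n) ↦ h₁·m ⊗ h₂·n`. -/
def actD (k H M N : Type) [CommRing k] [Ring H] [HopfAlgebra k H]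
    [AddCommGroup M] [Module k M] [Module H M] [IsScalarTower k H M] [SMulCommClass H k M]
    [AddCommGroup N] [Module k N] [Module H N] [IsScalarTower k H N] [SMulCommClass H k N] :
    H ⊗[k] (M ⊗[k] N) →ₗ[k] M ⊗[k] N :=
  (TensorProduct.map (actT k H M) (actT k H N)) ∘ₗ
    (TensorProduct.tensorTensorTensorComm k H H M N).toLinearMap ∘ₗ
    (LinearMap.rTensor (M ⊗[k] N) (Coalgebra.comul (R := k)))

/-- Left-hand side of the Yetter-Drinfeld compatibility condition,
`h ⊗ m ↦ h₁ m₍₋₁₎ ⊗ h₂ · m₍₀₎`, relative to an action map `act` and coaction `lam`. -/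
def ydLa (k H M : Type) [CommRing k] [Ring H] [HopfAlgebra k H] [AddCommGroup M] [Module k M]
    (act : H ⊗[k] M →ₗ[k] M) (lam : M →ₗ[k] H ⊗[k] M) : H ⊗[k] M →ₗ[k] H ⊗[k] M :=
  (TensorProduct.map (LinearMap.mul' k H) act) ∘ₗ
    (TensorProduct.tensorTensorTensorComm k H H H M).toLinearMap ∘ₗ
    (TensorProduct.map (Coalgebra.comul (R := k)) lam)

/-- Right-hand side of the Yetter-Drinfeld compatibility condition,
`h ⊗ m ↦ (h₁·m)₍₋₁₎ h₂ ⊗ (h₁·m)₍₀₎`. -/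
def ydRa (k H M : Type) [CommRing k] [Ring H] [HopfAlgebra k H] [AddCommGroup M] [Module k M]
    (act : H ⊗[k] M →ₗ[k] M) (lam : M →ₗ[k] H ⊗[k] M) : H ⊗[k] M →ₗ[k] H ⊗[k] M :=
  (LinearMap.rTensor M ((LinearMap.mul' k H) ∘ₗ (TensorProduct.comm k H H).toLinearMap)) ∘ₗ
    (TensorProduct.assoc k H H M).symm.toLinearMap ∘ₗ
    (LinearMap.lTensor H (lam ∘ₗ act)) ∘ₗ
    (TensorProduct.assoc k H H M).toLinearMap ∘ₗ
    (LinearMap.rTensor M (TensorProduct.comm k H H).toLinearMap) ∘ₗ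
    (LinearMap.rTensor M (Coalgebra.comul (R := k)))


section Transmutation

variable (k H : Type) [Field k] [Ring H] [HopfAlgebra k H]
variable {ι : Type} [Fintype ι] (R1 R2 : ι → H)

/-- The transmuted comultiplication `Δ̲(x) = ∑ x₁S(R²) ⊗ (R¹ ▷ x₂)`. -/
def transComul : H →ₗ[k] H ⊗[k] H :=
  ∑ i, (TensorProduct.map (LinearMap.mulRight k (HopfAlgebra.antipode (R := k) (R2 i)))
      ((adjT k H) ∘ₗ (TensorProduct.mk k H H (R1 i)))) ∘ₗ (Coalgebra.comul (R := k))

/-- The alternative form `∑ (R² ▷ x₂) ⊗ R¹x₁`. -/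
def transComul' : H →ₗ[k] H ⊗[k] H :=
  ∑ i, (TensorProduct.map ((adjT k H) ∘ₗ (TensorProduct.mk k H H (R2 i)))
      (LinearMap.mulLeft k (R1 i))) ∘ₗ
    (TensorProduct.comm k H H).toLinearMap ∘ₗ (Coalgebra.comul (R := k))

end Transmutation

-- ## Auxiliary development

noncomputable section ConvSec

variable {k H C : Type} [CommRing k] [Ring H] [Algebra k H]
  [AddCommGroup C] [Module k C] [Coalgebra k C]

/-- Convolution product on linear maps from a coalgebra to an algebra. -/
noncomputable def conv (f g : C →ₗ[k] H) : C →ₗ[k] H :=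
  LinearMap.mul' k H ∘ₗ TensorProduct.map f g ∘ₗ Coalgebra.comul

lemma conv_apply (f g : C →ₗ[k] H) (c : C) :
    conv f g c = LinearMap.mul' k H (TensorProduct.map f g (Coalgebra.comul c)) := rfl

/-- The convolution unit `η ∘ ε`. -/
noncomputable def convOne : C →ₗ[k] H := Algebra.linearMap k H ∘ₗ Coalgebra.counit

lemma convOne_apply (c : C) : convOne (k := k) (H := H) c
    = algebraMap k H (Coalgebra.counit c) := rfl

lemma conv_assoc (f g h : C →ₗ[k] H) : conv (conv f g) h = conv f (conv g h) := by
  ext c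
  have hA : ∀ u : C ⊗[k] C, LinearMap.mul' k H (TensorProduct.map (conv f g) h u)
      = LinearMap.mul' k H (TensorProduct.map
        (LinearMap.mul' k H ∘ₗ TensorProduct.map f g) h
        ((LinearMap.rTensor C (Coalgebra.comul (R := k))) u)) := by
    intro u
    induction u using TensorProduct.induction_on with
    | zero => simp
    | tmul x w => simp [conv_apply]
    | add u v hu hv => simp only [map_add, hu, hv]
  have hB : ∀ u : C ⊗[k] C, LinearMap.mul' k H (TensorProduct.map f (conv g h) u)
      = LinearMap.mul' k H (TensorProduct.map f
        (LinearMap.mul' k H ∘ₗ TensorProduct.map g h)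
        ((LinearMap.lTensor C (Coalgebra.comul (R := k))) u)) := by
    intro u
    induction u using TensorProduct.induction_on with
    | zero => simp
    | tmul x w => simp [conv_apply]
    | add u v hu hv => simp only [map_add, hu, hv]
  have hC : ∀ t : (C ⊗[k] C) ⊗[k] C,
      LinearMap.mul' k H (TensorProduct.map
        (LinearMap.mul' k H ∘ₗ TensorProduct.map f g) h t)
      = LinearMap.mul' k H (TensorProduct.map f
        (LinearMap.mul' k H ∘ₗ TensorProduct.map g h) (TensorProduct.assoc k C C C t)) := by
    intro t
    induction t using TensorProduct.induction_on with
    | zero => simp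
    | tmul v w =>
      induction v using TensorProduct.induction_on with
      | zero => simp
      | tmul x y => simp [mul_assoc]
      | add p q hp hq => simp only [add_tmul, map_add, hp, hq]
    | add u v hu hv => simp only [map_add, hu, hv]
  calc conv (conv f g) h c
      = LinearMap.mul' k H (TensorProduct.map (conv f g) h (Coalgebra.comul c)) := rfl
    _ = LinearMap.mul' k H (TensorProduct.map
        (LinearMap.mul' k H ∘ₗ TensorProduct.map f g) h
        ((LinearMap.rTensor C (Coalgebra.comul (R := k))) (Coalgebra.comul c))) := hA _
    _ = LinearMap.mul' k H (TensorProduct.map f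
        (LinearMap.mul' k H ∘ₗ TensorProduct.map g h)
        (TensorProduct.assoc k C C C
          ((LinearMap.rTensor C (Coalgebra.comul (R := k))) (Coalgebra.comul c)))) := hC _
    _ = LinearMap.mul' k H (TensorProduct.map f
        (LinearMap.mul' k H ∘ₗ TensorProduct.map g h)
        ((LinearMap.lTensor C (Coalgebra.comul (R := k))) (Coalgebra.comul c))) := by
        rw [Coalgebra.coassoc_apply]
    _ = conv f (conv g h) c := (hB _).symm

lemma conv_one_right (f : C →ₗ[k] H) : conv f convOne = f := by
  ext c
  have h3 : ∀ u : C ⊗[k] C,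
      LinearMap.mul' k H (TensorProduct.map f (convOne (k := k) (H := H)) u)
      = (LinearMap.mul' k H) (TensorProduct.map f (Algebra.linearMap k H)
          ((LinearMap.lTensor C (Coalgebra.counit (R := k))) u)) := by
    intro u
    induction u using TensorProduct.induction_on with
    | zero => simp
    | tmul x y => simp [convOne_apply]
    | add u v hu hv => simp only [map_add, hu, hv]
  calc conv f convOne c
      = LinearMap.mul' k H (TensorProduct.map f (Algebra.linearMap k H)
          ((LinearMap.lTensor C (Coalgebra.counit (R := k))) (Coalgebra.comul c))) := h3 _
    _ = f c := by rw [Coalgebra.lTensor_counit_comul]; simp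

lemma conv_one_left (g : C →ₗ[k] H) : conv convOne g = g := by
  ext c
  have h3 : ∀ u : C ⊗[k] C,
      LinearMap.mul' k H (TensorProduct.map (convOne (k := k) (H := H)) g u)
      = (LinearMap.mul' k H) (TensorProduct.map (Algebra.linearMap k H) g
          ((LinearMap.rTensor C (Coalgebra.counit (R := k))) u)) := by
    intro u
    induction u using TensorProduct.induction_on with
    | zero => simp
    | tmul x y => simp [convOne_apply]
    | add u v hu hv => simp only [map_add, hu, hv]
  calc conv convOne g c
      = LinearMap.mul' k H (TensorProduct.map (Algebra.linearMap k H) g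
          ((LinearMap.rTensor C (Coalgebra.counit (R := k))) (Coalgebra.comul c))) := h3 _
    _ = g c := by rw [Coalgebra.rTensor_counit_comul]; simp

lemma conv_eq_of (u f g : C →ₗ[k] H) (hf : conv f u = convOne) (hg : conv u g = convOne) :
    f = g := by
  have : conv f (conv u g) = conv (conv f u) g := (conv_assoc f u g).symm
  rw [hf, hg, conv_one_right, conv_one_left] at this
  exact this

end ConvSec

section Anti
variable {k H : Type} [CommRing k] [Ring H] [HopfAlgebra k H]

open Coalgebra HopfAlgebra

local notation "S" => HopfAlgebra.antipode (R := k) (A := H)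

lemma antipode_one' : S (1 : H) = 1 := by
  have h := HopfAlgebra.mul_antipode_rTensor_comul_apply (R := k) (a := (1 : H))
  simpa [Algebra.TensorProduct.one_def] using h

lemma hf' : conv ((S : H →ₗ[k] H) ∘ₗ LinearMap.mul' k H) (LinearMap.mul' k H) = convOne := by
  apply TensorProduct.ext'
  intro a b
  have key : ∀ u v : H ⊗[k] H,
      LinearMap.mul' k H (TensorProduct.map ((S : H →ₗ[k] H) ∘ₗ LinearMap.mul' k H)
        (LinearMap.mul' k H)
        (TensorProduct.tensorTensorTensorComm k H H H H (u ⊗ₜ[k] v)))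
      = LinearMap.mul' k H (LinearMap.rTensor H (S : H →ₗ[k] H) (u * v)) := by
    intro u v
    induction u using TensorProduct.induction_on with
    | zero => simp
    | tmul p q =>
      induction v using TensorProduct.induction_on with
      | zero => simp
      | tmul r s => simp [Algebra.TensorProduct.tmul_mul_tmul]
      | add v w hv hw => simp only [tmul_add, map_add, mul_add, hv, hw]
    | add u w hu hw => simp only [add_tmul, map_add, add_mul, hu, hw]
  show LinearMap.mul' k H (TensorProduct.map _ _ (Coalgebra.comul (a ⊗ₜ[k] b))) = _
  rw [TensorProduct.comul_def, AlgebraTensorModule.tensorTensorTensorComm_eq,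
    AlgebraTensorModule.map_eq]
  simp only [LinearMap.comp_apply, TensorProduct.map_tmul, LinearEquiv.coe_coe]
  rw [key, ← Bialgebra.comul_mul, HopfAlgebra.mul_antipode_rTensor_comul_apply]
  simp [convOne, TensorProduct.counit_def]
  exact Algebra.commutes _ _

lemma hg' : conv (LinearMap.mul' k H)
    ((LinearMap.mul' k H) ∘ₗ (TensorProduct.map (S : H →ₗ[k] H) (S : H →ₗ[k] H)) ∘ₗ
      (TensorProduct.comm k H H).toLinearMap) = convOne := by
  apply TensorProduct.ext'
  intro a b
  obtain ⟨ra⟩ : Nonempty (Coalgebra.Repr k a (H × H)) := ⟨Coalgebra.Repr.arbitrary k a⟩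
  obtain ⟨rb⟩ : Nonempty (Coalgebra.Repr k b (H × H)) := ⟨Coalgebra.Repr.arbitrary k b⟩
  show LinearMap.mul' k H (TensorProduct.map _ _ (Coalgebra.comul (a ⊗ₜ[k] b))) = _
  rw [TensorProduct.comul_def, AlgebraTensorModule.tensorTensorTensorComm_eq,
    AlgebraTensorModule.map_eq]
  simp only [LinearMap.comp_apply, TensorProduct.map_tmul]
  rw [← ra.eq, ← rb.eq]
  simp only [sum_tmul, tmul_sum, map_sum, tensorTensorTensorComm_tmul,
    TensorProduct.map_tmul, LinearMap.coe_comp, Function.comp_apply,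
    LinearEquiv.coe_coe, comm_tmul, LinearMap.mul'_apply]
  have step : ∀ i ∈ ra.index, ∑ j ∈ rb.index,
      ra.left i * rb.left j * (S (rb.right j) * S (ra.right i))
      = counit (R := k) b • (ra.left i * S (ra.right i)) := by
    intro i _
    have : ∀ j ∈ rb.index, ra.left i * rb.left j * (S (rb.right j) * S (ra.right i))
        = ra.left i * ((rb.left j * S (rb.right j)) * S (ra.right i)) := by
      intro j _; rw [mul_assoc, ← mul_assoc (rb.left j)]
    rw [Finset.sum_congr rfl this, ← Finset.mul_sum, ← Finset.sum_mul,
      HopfAlgebra.sum_mul_antipode_eq_smul (R := k) rb]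
    rw [smul_mul_assoc, one_mul, mul_smul_comm]
  rw [Finset.sum_comm, Finset.sum_congr rfl step, ← Finset.smul_sum,
    HopfAlgebra.sum_mul_antipode_eq_smul (R := k) ra]
  simp [convOne, TensorProduct.counit_def, Algebra.algebraMap_eq_smul_one,
    mul_smul, mul_comm]
  rw [smul_comm]

lemma antipode_mul' (a b : H) : S (a * b) = S b * S a := by
  have h := conv_eq_of (LinearMap.mul' k H)
    ((S : H →ₗ[k] H) ∘ₗ LinearMap.mul' k H)
    ((LinearMap.mul' k H) ∘ₗ (TensorProduct.map (S : H →ₗ[k] H) (S : H →ₗ[k] H)) ∘ₗ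
      (TensorProduct.comm k H H).toLinearMap) hf' hg'
  have := LinearMap.congr_fun h (a ⊗ₜ[k] b)
  simpa using this

end Anti

section RmatSec

variable {k H : Type} [Field k] [Ring H] [HopfAlgebra k H]
variable {ι : Type} [Fintype ι] {R1 R2 : ι → H}

local notation "S" => HopfAlgebra.antipode (R := k) (A := H)

lemma A_mul_R (hqt : QT k H R1 R2) :
    (∑ i, (S (R1 i)) ⊗ₜ[k] R2 i) * (∑ i, R1 i ⊗ₜ[k] R2 i) = 1 := by
  have h := congrArg
    (LinearMap.rTensor H ((LinearMap.mul' k H) ∘ₗ LinearMap.rTensor H (S : H →ₗ[k] H))) hqt.qt2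
  simp only [map_sum, LinearMap.rTensor_tmul, LinearMap.comp_apply,
    HopfAlgebra.mul_antipode_rTensor_comul_apply, LinearMap.mul'_apply] at h
  calc (∑ i, (S (R1 i)) ⊗ₜ[k] R2 i) * (∑ i, R1 i ⊗ₜ[k] R2 i)
      = ∑ i, ∑ j, (S (R1 i) * R1 j) ⊗ₜ[k] (R2 i * R2 j) := by
        rw [Finset.sum_mul_sum]
        simp [Algebra.TensorProduct.tmul_mul_tmul]
    _ = ∑ i, (algebraMap k H (Coalgebra.counit (R := k) (R1 i))) ⊗ₜ[k] R2 i := h.symm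
    _ = (1 : H) ⊗ₜ[k] ∑ i, Coalgebra.counit (R := k) (R1 i) • R2 i := by
        rw [tmul_sum]
        congr 1
        ext i
        rw [Algebra.algebraMap_eq_smul_one, smul_tmul]
    _ = 1 := by rw [hqt.qt1a, Algebra.TensorProduct.one_def]

lemma R_mul_A (hqt : QT k H R1 R2) :
    (∑ i, R1 i ⊗ₜ[k] R2 i) * (∑ i, (S (R1 i)) ⊗ₜ[k] R2 i) = 1 := by
  have h := congrArg
    (LinearMap.rTensor H ((LinearMap.mul' k H) ∘ₗ LinearMap.lTensor H (S : H →ₗ[k] H))) hqt.qt2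
  simp only [map_sum, LinearMap.rTensor_tmul, LinearMap.comp_apply,
    HopfAlgebra.mul_antipode_lTensor_comul_apply, LinearMap.lTensor_tmul,
    LinearMap.mul'_apply] at h
  calc (∑ i, R1 i ⊗ₜ[k] R2 i) * (∑ i, (S (R1 i)) ⊗ₜ[k] R2 i)
      = ∑ i, ∑ j, (R1 i * S (R1 j)) ⊗ₜ[k] (R2 i * R2 j) := by
        rw [Finset.sum_mul_sum]
        simp [Algebra.TensorProduct.tmul_mul_tmul]
    _ = ∑ i, (algebraMap k H (Coalgebra.counit (R := k) (R1 i))) ⊗ₜ[k] R2 i := h.symm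
    _ = (1 : H) ⊗ₜ[k] ∑ i, Coalgebra.counit (R := k) (R1 i) • R2 i := by
        rw [tmul_sum]
        congr 1
        ext i
        rw [Algebra.algebraMap_eq_smul_one, smul_tmul]
    _ = 1 := by rw [hqt.qt1a, Algebra.TensorProduct.one_def]

lemma SS_R (hqt : QT k H R1 R2) :
    ∑ i, (S (R1 i)) ⊗ₜ[k] (S (R2 i)) = ∑ i, R1 i ⊗ₜ[k] R2 i := by
  set Rel : H ⊗[k] H := ∑ i, R1 i ⊗ₜ[k] R2 i with hRel
  set A : H ⊗[k] H := ∑ i, (S (R1 i)) ⊗ₜ[k] R2 i with hA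
  set B : H ⊗[k] H := ∑ i, (S (R1 i)) ⊗ₜ[k] (S (R2 i)) with hB
  have hAR : A * Rel = 1 := A_mul_R hqt
  have hRA : Rel * A = 1 := R_mul_A hqt
  -- the three algebra maps
  set D : H ⊗[k] H →ₐ[k] H ⊗[k] (H ⊗[k] H) :=
    Algebra.TensorProduct.map (AlgHom.id k H) (Bialgebra.comulAlgHom k H) with hD
  set e12 : H ⊗[k] H →ₐ[k] H ⊗[k] (H ⊗[k] H) :=
    Algebra.TensorProduct.map (AlgHom.id k H) Algebra.TensorProduct.includeLeft with he12
  set e13 : H ⊗[k] H →ₐ[k] H ⊗[k] (H ⊗[k] H) :=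
    Algebra.TensorProduct.map (AlgHom.id k H) Algebra.TensorProduct.includeRight with he13
  have hqt3 : D Rel = e13 Rel * e12 Rel := by
    rw [hRel, map_sum]
    simp only [hD, Algebra.TensorProduct.map_tmul, AlgHom.coe_id, id_eq,
      Bialgebra.comulAlgHom_apply]
    rw [hqt.qt3]
    rw [map_sum, map_sum, Finset.sum_mul_sum]
    simp only [he12, he13, Algebra.TensorProduct.map_tmul, AlgHom.coe_id, id_eq,
      Algebra.TensorProduct.includeLeft_apply, Algebra.TensorProduct.includeRight_apply,
      Algebra.TensorProduct.tmul_mul_tmul, one_mul, mul_one]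
  have hDA : D A = e12 A * e13 A := by
    have h2 : e13 A * e13 Rel = 1 := by rw [← map_mul, hAR, map_one]
    have h31 : e12 Rel * e12 A = 1 := by rw [← map_mul, hRA, map_one]
    have h3 : (e13 Rel * e12 Rel) * (e12 A * e13 A) = 1 := by
      calc (e13 Rel * e12 Rel) * (e12 A * e13 A)
          = e13 Rel * ((e12 Rel * e12 A) * e13 A) := by
            rw [mul_assoc, ← mul_assoc (e12 Rel)]
        _ = e13 Rel * e13 A := by rw [h31, one_mul]
        _ = 1 := by rw [← map_mul, hRA, map_one]
    calc D A = D A * ((e13 Rel * e12 Rel) * (e12 A * e13 A)) := by rw [h3, mul_one]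
      _ = (D A * D Rel) * (e12 A * e13 A) := by rw [hqt3]; exact (mul_assoc _ _ _).symm
      _ = e12 A * e13 A := by rw [← map_mul, hAR, map_one, one_mul]
  -- apply a ⊗ (b ⊗ c) ↦ a ⊗ S(b)c to `hDA`
  set Phi : H ⊗[k] (H ⊗[k] H) →ₗ[k] H ⊗[k] H :=
    LinearMap.lTensor H ((LinearMap.mul' k H) ∘ₗ LinearMap.rTensor H (S : H →ₗ[k] H)) with hPhi
  have hone : ∑ i, Coalgebra.counit (R := k) (R2 i) • (S (R1 i)) = 1 := by
    have hc := congrArg (S : H →ₗ[k] H) hqt.qt1b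
    simpa [map_sum, map_smul, antipode_one'] using hc
  have lhs_eq : Phi (D A) = (1 : H ⊗[k] H) := by
    rw [hA, hD, map_sum, map_sum]
    simp only [Algebra.TensorProduct.map_tmul, AlgHom.coe_id, id_eq,
      Bialgebra.comulAlgHom_apply, hPhi, LinearMap.lTensor_tmul, LinearMap.comp_apply,
      HopfAlgebra.mul_antipode_rTensor_comul_apply]
    calc ∑ i, (S (R1 i)) ⊗ₜ[k] algebraMap k H (Coalgebra.counit (R := k) (R2 i))
        = ∑ i, (Coalgebra.counit (R := k) (R2 i) • (S (R1 i))) ⊗ₜ[k] (1 : H) := by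
          apply Finset.sum_congr rfl
          intro i _
          rw [Algebra.algebraMap_eq_smul_one, smul_tmul]
      _ = (∑ i, Coalgebra.counit (R := k) (R2 i) • (S (R1 i))) ⊗ₜ[k] (1 : H) := by
          rw [sum_tmul]
      _ = 1 := by rw [hone, Algebra.TensorProduct.one_def]
  have rhs_eq : Phi (e12 A * e13 A) = B * A := by
    have prod_eq : e12 A * e13 A
        = ∑ i, ∑ j, (S (R1 i) * S (R1 j)) ⊗ₜ[k] ((R2 i) ⊗ₜ[k] (R2 j)) := by
      rw [hA, he12, he13, map_sum, map_sum, Finset.sum_mul_sum]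
      simp [Algebra.TensorProduct.tmul_mul_tmul]
    rw [prod_eq, hB, hA, Finset.sum_mul_sum]
    simp [Algebra.TensorProduct.tmul_mul_tmul, hPhi]
  have hBA : (1 : H ⊗[k] H) = B * A := by rw [← lhs_eq, ← rhs_eq, hDA]
  calc B = B * (A * Rel) := by rw [hAR, mul_one]
    _ = (B * A) * Rel := by rw [mul_assoc]
    _ = Rel := by rw [← hBA, one_mul]

end RmatSec

section MainAux
variable {k H : Type} [Field k] [Ring H] [HopfAlgebra k H]
variable {ι : Type} [Fintype ι] {R1 R2 : ι → H}

local notation "S" => HopfAlgebra.antipode (R := k) (A := H)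

/-- `p ⊗ q ↦ p * (y * S q)`, the "adjoint action with precomputed comultiplication". -/
def psiA (k H : Type) [CommRing k] [Ring H] [HopfAlgebra k H] (y : H) : H ⊗[k] H →ₗ[k] H :=
  (LinearMap.mul' k H) ∘ₗ
    LinearMap.lTensor H ((LinearMap.mulLeft k y) ∘ₗ (HopfAlgebra.antipode (R := k)))

lemma psiA_tmul (y a b : H) :
    psiA k H y (a ⊗ₜ[k] b) = a * (y * (S b)) := rfl

lemma adjT_tmul (h y : H) :
    adjT k H (h ⊗ₜ[k] y) = psiA k H y (Coalgebra.comul (R := k) h) := by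
  simp only [adjT, LinearMap.comp_apply, LinearMap.rTensor_tmul]
  generalize Coalgebra.comul (R := k) h = w
  induction w using TensorProduct.induction_on with
  | zero => simp only [zero_tmul, map_zero]
  | tmul a b => simp [psiA]
  | add u v hu hv => simp only [add_tmul, map_add, hu, hv, psiA]


/-- `p ⊗ q ↦ (p * (R2 j * S (R2 i))) ⊗ (R1 i * (q * R1 j))`. -/
def Em (i j : ι) : H ⊗[k] H →ₗ[k] H ⊗[k] H :=
  TensorProduct.map (LinearMap.mulRight k ((R2 j) * S (R2 i)))
    ((LinearMap.mulLeft k (R1 i)) ∘ₗ (LinearMap.mulRight k (R1 j)))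

/-- `p ⊗ q ↦ ((R2 j * q) * S (R2 i)) ⊗ (R1 i * (R1 j * p))`. -/
def Dm (i j : ι) : H ⊗[k] H →ₗ[k] H ⊗[k] H :=
  (TensorProduct.map ((LinearMap.mulRight k (S (R2 i))) ∘ₗ (LinearMap.mulLeft k (R2 j)))
    ((LinearMap.mulLeft k (R1 i)) ∘ₗ (LinearMap.mulLeft k (R1 j)))) ∘ₗ
    (TensorProduct.comm k H H).toLinearMap

/-- `a ⊗ b ↦ (b * S (R2 i)) ⊗ (R1 i * a)`. -/
def Qm (i : ι) : H ⊗[k] H →ₗ[k] H ⊗[k] H :=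
  (TensorProduct.map (LinearMap.mulRight k (S (R2 i))) (LinearMap.mulLeft k (R1 i))) ∘ₗ
    (TensorProduct.comm k H H).toLinearMap

lemma L1 (hqt : QT k H R1 R2) (u : H ⊗[k] H) :
    ∑ i, (TensorProduct.map (LinearMap.mulRight k (S (R2 i)))
        ((adjT k H) ∘ₗ (TensorProduct.mk k H H (R1 i)))) u
    = ∑ i, ∑ j, Em (R1 := R1) (R2 := R2) i j u := by
  induction u using TensorProduct.induction_on with
  | zero => simp
  | add u v hu hv => simp only [map_add, hu, hv, Finset.sum_add_distrib]
  | tmul p q =>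
    have stepA := congrArg
      ((TensorProduct.map ((LinearMap.mulLeft k p) ∘ₗ (S : H →ₗ[k] H)) (psiA k H q)) ∘ₗ
        (TensorProduct.comm k (H ⊗[k] H) H).toLinearMap) hqt.qt2
    simp only [map_sum, LinearMap.comp_apply, LinearEquiv.coe_coe, comm_tmul,
      TensorProduct.map_tmul, LinearMap.mulLeft_apply, psiA_tmul] at stepA
    have stepB : ∀ i : ι,
        ∑ j, (p * ((S (R2 j)) * (S (R2 i)))) ⊗ₜ[k] (R1 i * (q * (S (R1 j))))
        = ∑ j, (p * (R2 j * (S (R2 i)))) ⊗ₜ[k] (R1 i * (q * R1 j)) := by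
      intro i
      have := congrArg
        ((TensorProduct.map ((LinearMap.mulLeft k p) ∘ₗ (LinearMap.mulRight k (S (R2 i))))
          ((LinearMap.mulLeft k (R1 i)) ∘ₗ (LinearMap.mulLeft k q))) ∘ₗ
          (TensorProduct.comm k H H).toLinearMap) (SS_R hqt)
      simpa only [map_sum, LinearMap.comp_apply, LinearEquiv.coe_coe, comm_tmul,
        TensorProduct.map_tmul, LinearMap.mulLeft_apply, LinearMap.mulRight_apply] using this
    calc ∑ i, (TensorProduct.map (LinearMap.mulRight k (S (R2 i)))
          ((adjT k H) ∘ₗ (TensorProduct.mk k H H (R1 i)))) (p ⊗ₜ[k] q)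
        = ∑ i, (p * (S (R2 i))) ⊗ₜ[k] (psiA k H q (Coalgebra.comul (R := k) (R1 i))) := by
          simp only [TensorProduct.map_tmul, LinearMap.comp_apply, mk_apply,
            LinearMap.mulRight_apply, adjT_tmul]
      _ = ∑ i, ∑ j, (p * (S (R2 i * R2 j))) ⊗ₜ[k] (R1 i * (q * (S (R1 j)))) := stepA
      _ = ∑ i, ∑ j, (p * ((S (R2 j)) * (S (R2 i)))) ⊗ₜ[k] (R1 i * (q * (S (R1 j)))) := by
          simp only [antipode_mul']
      _ = ∑ i, ∑ j, (p * (R2 j * (S (R2 i)))) ⊗ₜ[k] (R1 i * (q * R1 j)) := by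
          exact Finset.sum_congr rfl fun i _ => stepB i
      _ = ∑ i, ∑ j, Em (R1 := R1) (R2 := R2) i j (p ⊗ₜ[k] q) := by
          simp only [Em, TensorProduct.map_tmul, LinearMap.comp_apply,
            LinearMap.mulLeft_apply, LinearMap.mulRight_apply]

lemma L2 (hqt : QT k H R1 R2) (u : H ⊗[k] H) :
    ∑ i, (TensorProduct.map ((adjT k H) ∘ₗ (TensorProduct.mk k H H (R2 i)))
        (LinearMap.mulLeft k (R1 i))) (TensorProduct.comm k H H u)
    = ∑ i, ∑ j, Dm (R1 := R1) (R2 := R2) i j u := by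
  induction u using TensorProduct.induction_on with
  | zero => simp
  | add u v hu hv => simp only [map_add, hu, hv, Finset.sum_add_distrib]
  | tmul p q =>
    have stepA := congrArg
      ((TensorProduct.map (psiA k H q) (LinearMap.mulRight k p)) ∘ₗ
        (TensorProduct.comm k H (H ⊗[k] H)).toLinearMap) hqt.qt3
    simp only [map_sum, LinearMap.comp_apply, LinearEquiv.coe_coe, comm_tmul,
      TensorProduct.map_tmul, LinearMap.mulRight_apply, psiA_tmul] at stepA
    calc ∑ i, (TensorProduct.map ((adjT k H) ∘ₗ (TensorProduct.mk k H H (R2 i)))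
          (LinearMap.mulLeft k (R1 i))) (TensorProduct.comm k H H (p ⊗ₜ[k] q))
        = ∑ i, (psiA k H q (Coalgebra.comul (R := k) (R2 i))) ⊗ₜ[k] (R1 i * p) := by
          simp only [comm_tmul, TensorProduct.map_tmul, LinearMap.comp_apply, mk_apply,
            LinearMap.mulLeft_apply, adjT_tmul]
      _ = ∑ i, ∑ j, (R2 j * (q * (S (R2 i)))) ⊗ₜ[k] (R1 i * R1 j * p) := stepA
      _ = ∑ i, ∑ j, Dm (R1 := R1) (R2 := R2) i j (p ⊗ₜ[k] q) := by
          simp only [Dm, TensorProduct.map_tmul, LinearMap.comp_apply, LinearEquiv.coe_coe,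
            comm_tmul, LinearMap.mulLeft_apply, LinearMap.mulRight_apply, mul_assoc]

lemma L3a (u : H ⊗[k] H) :
    ∑ i, Qm (R1 := R1) (R2 := R2) i ((∑ j, R1 j ⊗ₜ[k] R2 j) * u)
    = ∑ i, ∑ j, Dm (R1 := R1) (R2 := R2) i j u := by
  induction u using TensorProduct.induction_on with
  | zero => simp
  | add u v hu hv => simp only [mul_add, map_add, hu, hv, Finset.sum_add_distrib]
  | tmul p q =>
    rw [Finset.sum_mul]
    simp only [Algebra.TensorProduct.tmul_mul_tmul, map_sum]
    apply Finset.sum_congr rfl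
    intro i _
    apply Finset.sum_congr rfl
    intro j _
    simp only [Qm, Dm, LinearMap.comp_apply, LinearEquiv.coe_coe, comm_tmul,
      TensorProduct.map_tmul, LinearMap.mulLeft_apply, LinearMap.mulRight_apply]

lemma L3b (u : H ⊗[k] H) :
    ∑ i, Qm (R1 := R1) (R2 := R2) i ((TensorProduct.comm k H H u) * (∑ j, R1 j ⊗ₜ[k] R2 j))
    = ∑ i, ∑ j, Em (R1 := R1) (R2 := R2) i j u := by
  induction u using TensorProduct.induction_on with
  | zero => simp
  | add u v hu hv => simp only [map_add, add_mul, hu, hv, Finset.sum_add_distrib]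
  | tmul p q =>
    rw [comm_tmul, Finset.mul_sum]
    simp only [Algebra.TensorProduct.tmul_mul_tmul, map_sum]
    apply Finset.sum_congr rfl
    intro i _
    apply Finset.sum_congr rfl
    intro j _
    simp only [Qm, Em, LinearMap.comp_apply, LinearEquiv.coe_coe, comm_tmul,
      TensorProduct.map_tmul, LinearMap.mulLeft_apply, LinearMap.mulRight_apply, mul_assoc]

end MainAux


section Transmutation

variable (k H : Type) [Field k] [Ring H] [HopfAlgebra k H]
variable {ι : Type} [Fintype ι] (R1 R2 : ι → H)

/-- For a quasitriangular Hopf algebra `(H,R)`, the transmuted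
comultiplication `Δ̲(x) = ∑ x₁S(R²) ⊗ (R¹ ▷ x₂)` equals `∑ (R² ▷ x₂) ⊗ R¹x₁`. -/
theorem transComul_eq (hqt : QT k H R1 R2) :
    transComul k H R1 R2 = transComul' k H R1 R2 := by
  ext x
  have lhs : transComul k H R1 R2 x
      = ∑ i, ∑ j, Em (R1 := R1) (R2 := R2) i j (Coalgebra.comul (R := k) x) := by
    rw [transComul, LinearMap.sum_apply]
    simp only [LinearMap.comp_apply]
    exact L1 hqt _
  have rhs : transComul' k H R1 R2 x
      = ∑ i, ∑ j, Dm (R1 := R1) (R2 := R2) i j (Coalgebra.comul (R := k) x) := by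
    rw [transComul', LinearMap.sum_apply]
    simp only [LinearMap.comp_apply, LinearEquiv.coe_coe]
    exact L2 hqt _
  rw [lhs, rhs, ← L3a (R1 := R1) (R2 := R2) (Coalgebra.comul (R := k) x),
    ← L3b (R1 := R1) (R2 := R2) (Coalgebra.comul (R := k) x)]
  apply Finset.sum_congr rfl
  intro i _
  rw [hqt.qt4 x]


end Transmutation

end
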